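/- Let $A$ be a Dedekind domain with fraction field $K$, $B$ the integral closure of $A$ in a separable quadratic extension $L$, $\Lambda$ a projective $B$-module of rank 2, and $h$ an integral hermitian form on $\Lambda$ (i.e., $h(\Lambda) \subseteq A$). Then $D_{B/A} \cdot d(\Lambda, h)$ is an integral ideal of $A$, where $d(\Lambda, h)$ is the fractional ideal generated by $\det(s(v_i, v_j))$ over pairs of elements of $\Lambda$, and $s$ is the hermitian symmetric form with $s(x,x) = h(x)$. -/

import Mathlib

/-- for an integral hermitian form `h` (with hermitian symmetric
form `s`) on a projective rank-2 module `Λ` over `B`, the product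
`D_{B/A} · d(Λ, h)` is an integral ideal of `A`; here `d(Λ, h)` is generated
by the determinants `det (s(vᵢ, vⱼ))` and `D_{B/A}` is the discriminant ideal
of `B` over `A` (all viewed inside `L`). -/
theorem statement14
    (A : Type*) [CommRing A] [IsDedekindDomain A]
    (K : Type*) [Field K] [Algebra A K] [IsFractionRing A K]
    (L : Type*) [Field L] [Algebra K L] [Algebra A L] [IsScalarTower A K L]
    [Algebra.IsSeparable K L] (hL : Module.finrank K L = 2)
    (σ : L ≃ₐ[K] L) (hσinv : ∀ l, σ (σ l) = l) (hσne : σ ≠ AlgEquiv.refl)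
    (Λ : Type*) [AddCommGroup Λ] [Module (integralClosure A L) Λ]
    [Module.Projective (integralClosure A L) Λ]
    [Module.Finite (integralClosure A L) Λ]
    (hrk : Module.rank (integralClosure A L) Λ = 2)
    -- the hermitian symmetric form `s` of the integral hermitian form `h`
    (s : Λ → Λ → L)
    (hadd : ∀ x x' y : Λ, s (x + x') y = s x y + s x' y)
    (hlin : ∀ (b : integralClosure A L) (x y : Λ), s (b • x) y = (b : L) * s x y)
    (hsymm : ∀ x y : Λ, s x y = σ (s y x))
    (hint : ∀ x : Λ, ∃ a : A, s x x = algebraMap A L a) :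
    (Submodule.span A
        {x : L | ∃ c : Fin 2 → L, (∀ k, c k ∈ integralClosure A L) ∧
          x = algebraMap K L
            (Matrix.det (Matrix.of fun k m => Algebra.trace K L (c k * c m)))}) *
      (Submodule.span A
        {x : L | ∃ v₁ v₂ : Λ, x = s v₁ v₁ * s v₂ v₂ - s v₁ v₂ * s v₂ v₁})
      ≤ (1 : Submodule A L) := by
  classical
  haveI : FiniteDimensional K L := Module.finite_of_finrank_pos (by rw [hL]; norm_num)
  -- L/K is Galois with Galois group {id, σ}
  have hcard : Fintype.card (L ≃ₐ[K] L) = 2 := by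
    have h1 : 1 < Fintype.card (L ≃ₐ[K] L) :=
      Fintype.one_lt_card_iff_nontrivial.2 ⟨⟨σ, AlgEquiv.refl, hσne⟩⟩
    have h2 : Fintype.card (L ≃ₐ[K] L) ≤ 2 := by
      have := (Fintype.card_congr (algEquivEquivAlgHom K L).toEquiv).le.trans
        ((finrank_algHom K L).trans (Module.finrank_linearMap_self K L L).le)
      omega
    omega
  haveI : IsGalois K L := IsGalois.of_card_aut_eq_finrank K L (Nat.card_eq_fintype_card.trans (hcard.trans hL.symm))
  have huniv : (Finset.univ : Finset (L ≃ₐ[K] L)) = {AlgEquiv.refl, σ} := by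
    symm
    apply Finset.eq_of_subset_of_card_le (Finset.subset_univ _)
    rw [Finset.card_univ, hcard, Finset.card_pair (Ne.symm hσne)]
  -- trace formula
  have htr : ∀ x : L, algebraMap K L (Algebra.trace K L x) = x + σ x := by
    intro x
    rw [trace_eq_sum_automorphisms, huniv, Finset.sum_pair (Ne.symm hσne)]
    rfl
  -- fixed field of σ is K
  have hfix : ∀ x : L, σ x = x → ∃ k : K, algebraMap K L k = x := by
    intro x hx
    have hmem : x ∈ IntermediateField.fixedField
        (IntermediateField.fixingSubgroup (⊥ : IntermediateField K L)) := by
      intro g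
      have hg : (g : L ≃ₐ[K] L) ∈ (Finset.univ : Finset (L ≃ₐ[K] L)) := Finset.mem_univ _
      rw [huniv, Finset.mem_insert, Finset.mem_singleton] at hg
      rcases hg with h | h
      · show (g : L ≃ₐ[K] L) x = x
        rw [h]; rfl
      · show (g : L ≃ₐ[K] L) x = x
        rw [h]; exact hx
    rw [IsGalois.fixedField_fixingSubgroup ⊥] at hmem
    exact IntermediateField.mem_bot.mp hmem
  have hKinj : Function.Injective (algebraMap K L) := (algebraMap K L).injective
  -- σ-fixed integral elements come from A
  have hAK : ∀ x : L, σ x = x → IsIntegral A x → ∃ a : A, algebraMap A L a = x := by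
    intro x hx hxi
    obtain ⟨k, hk⟩ := hfix x hx
    rw [← hk] at hxi
    obtain ⟨a, ha⟩ := IsIntegrallyClosed.isIntegral_iff.mp
      ((isIntegral_algebraMap_iff hKinj).mp hxi)
    exact ⟨a, by rw [IsScalarTower.algebraMap_apply A K L, ha, hk]⟩
  -- σ preserves integrality over A
  have hσA : ∀ x : L, IsIntegral A x → IsIntegral A (σ x) := by
    intro x hx
    exact hx.map ((σ : L →ₐ[K] L).restrictScalars A)
  -- bilinearity in the second variable
  have hadd2 : ∀ x y y' : Λ, s x (y + y') = s x y + s x y' := by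
    intro x y y'
    rw [hsymm x (y + y'), hadd, map_add, ← hsymm, ← hsymm]
  have hlin2 : ∀ (b : integralClosure A L) (x y : Λ), s x (b • y) = σ (b : L) * s x y := by
    intro b x y
    rw [hsymm x (b • y), hlin, map_mul, ← hsymm]
  -- expansion of h(v₁ + b v₂)
  have hexp : ∀ (b : integralClosure A L) (v₁ v₂ : Λ),
      s (v₁ + b • v₂) (v₁ + b • v₂) =
        s v₁ v₁ + σ (b : L) * s v₁ v₂ + (b : L) * s v₂ v₁ +
          (b : L) * σ (b : L) * s v₂ v₂ := by
    intro b v₁ v₂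
    rw [hadd, hlin, hadd2, hadd2, hlin2, hlin2]
    ring
  -- key integrality: σ(b)·s(v₁,v₂) + b·s(v₂,v₁) ∈ A for b ∈ B
  have hkey : ∀ (b : integralClosure A L) (v₁ v₂ : Λ), ∃ a : A,
      algebraMap A L a = σ (b : L) * s v₁ v₂ + (b : L) * s v₂ v₁ := by
    intro b v₁ v₂
    obtain ⟨a1, h1⟩ := hint v₁
    obtain ⟨a2, h2⟩ := hint v₂
    obtain ⟨a3, h3⟩ := hint (v₁ + b • v₂)
    obtain ⟨a4, h4⟩ := hAK ((b : L) * σ (b : L))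
      (by rw [map_mul, hσinv]; ring) ((b.2).mul (hσA _ b.2))
    refine ⟨a3 - a1 - a4 * a2, ?_⟩
    rw [map_sub, map_sub, map_mul, ← h1, ← h2, ← h3, h4]
    linear_combination hexp b v₁ v₂
  have hkey' : ∀ x : L, IsIntegral A x → ∀ v₁ v₂ : Λ, ∃ a : A,
      algebraMap A L a = σ x * s v₁ v₂ + x * s v₂ v₁ :=
    fun x hx v₁ v₂ => hkey ⟨x, hx⟩ v₁ v₂
  have halgσ : ∀ a : A, σ (algebraMap A L a) = algebraMap A L a := by
    intro a
    rw [IsScalarTower.algebraMap_apply A K L]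
    exact σ.commutes _
  -- reduce to generators
  rw [Submodule.span_mul_span, Submodule.span_le]
  rintro z ⟨x, hx, y, hy, rfl⟩
  obtain ⟨c, hc, rfl⟩ := hx
  obtain ⟨v₁, v₂, rfl⟩ := hy
  rw [SetLike.mem_coe, Submodule.mem_one]
  -- the discriminant determinant is δ² with δ skew under σ
  set δ : L := c 0 * σ (c 1) - c 1 * σ (c 0) with hδdef
  have hδint : IsIntegral A δ :=
    ((hc 0).mul (hσA _ (hc 1))).sub ((hc 1).mul (hσA _ (hc 0)))
  have hσδ : σ δ = -δ := by
    rw [hδdef, map_sub, map_mul, map_mul, hσinv, hσinv]; ring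
  have hdet : algebraMap K L
      (Matrix.det (Matrix.of fun k m => Algebra.trace K L (c k * c m))) = δ ^ 2 := by
    rw [Matrix.det_fin_two, map_sub, map_mul, map_mul]
    simp only [Matrix.of_apply]
    rw [htr, htr, htr, htr, map_mul, map_mul, map_mul, map_mul, hδdef]
    ring
  obtain ⟨aδ, haδ⟩ := hAK (δ ^ 2) (by rw [map_pow, hσδ]; ring) (hδint.pow 2)
  -- the hermitian data
  obtain ⟨a0, ha0⟩ := hkey' (σ (c 0)) (hσA _ (hc 0)) v₁ v₂
  rw [hσinv] at ha0
  obtain ⟨a1, ha1⟩ := hkey' (σ (c 1)) (hσA _ (hc 1)) v₁ v₂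
  rw [hσinv] at ha1
  obtain ⟨b1, hb1⟩ := hint v₁
  obtain ⟨b2, hb2⟩ := hint v₂
  set E : L := c 0 * algebraMap A L a1 - c 1 * algebraMap A L a0 with hEdef
  have hEint : IsIntegral A E :=
    ((hc 0).mul isIntegral_algebraMap).sub ((hc 1).mul isIntegral_algebraMap)
  have hσE : σ E = σ (c 0) * algebraMap A L a1 - σ (c 1) * algebraMap A L a0 := by
    rw [hEdef, map_sub, map_mul, map_mul, halgσ, halgσ]
  obtain ⟨aN, haN⟩ := hAK (E * σ E) (by rw [map_mul, hσinv]; ring) (hEint.mul (hσA _ hEint))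
  refine ⟨aδ * (b1 * b2) + aN, ?_⟩
  rw [map_add, map_mul, map_mul, haδ, haN, hdet, ← hb1, ← hb2, hσE, hEdef,
    ha0, ha1, hsymm v₁ v₂, hδdef]
  ring
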